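/- For a finite group G, the order super power graph P^o(G) equals the order super commuting graph Δ^o(G) if and only if every element of G has prime power order (i.e., for every x ∈ G, o(x) = p^k for some prime p and integer k ≥ 0). -/

import Mathlib

/-- The power graph of a group `G`: distinct `x, y` are adjacent iff one is a power
of the other, i.e. `x ∈ ⟨y⟩` or `y ∈ ⟨x⟩`. -/
def powerGraph (G : Type*) [Group G] : SimpleGraph G :=
  SimpleGraph.fromRel (fun x y => x ∈ Subgroup.zpowers y)

/-- The enhanced power graph of a group `G`: distinct `x, y` are adjacent iff they lie
in a common cyclic subgroup. -/
def enhancedPowerGraph (G : Type*) [Group G] : SimpleGraph G :=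
  SimpleGraph.fromRel
    (fun x y => ∃ z : G, x ∈ Subgroup.zpowers z ∧ y ∈ Subgroup.zpowers z)

/-- The commuting graph of a group `G`: distinct `x, y` are adjacent iff they commute. -/
def commutingGraph (G : Type*) [Group G] : SimpleGraph G :=
  SimpleGraph.fromRel (fun x y => x * y = y * x)

/-- The order super graph of a graph `A` on a group `G`: distinct `x, y` are adjacent iff
they have the same order, or some elements of the same orders are adjacent in `A`. -/
def orderSuper (G : Type*) [Group G] (A : SimpleGraph G) : SimpleGraph G :=
  SimpleGraph.fromRel (fun x y =>
    orderOf x = orderOf y ∨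
      ∃ x' y' : G, orderOf x' = orderOf x ∧ orderOf y' = orderOf y ∧ A.Adj x' y')

/-- The conjugacy super graph of a graph `A` on a group `G`: distinct `x, y` are adjacent
iff they are conjugate, or some conjugates of them are adjacent in `A`. -/
def conjSuper (G : Type*) [Group G] (A : SimpleGraph G) : SimpleGraph G :=
  SimpleGraph.fromRel (fun x y =>
    IsConj x y ∨ ∃ x' y' : G, IsConj x x' ∧ IsConj y y' ∧ A.Adj x' y')

/-- A vertex of a simple graph is dominant if it is adjacent to every other vertex. -/
def IsDominantVertex {V : Type*} (Γ : SimpleGraph V) (v : V) : Prop :=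
  ∀ w, w ≠ v → Γ.Adj v w

lemma adj_orderSuper {G : Type*} [Group G] (A : SimpleGraph G) (x y : G) :
    (orderSuper G A).Adj x y ↔ x ≠ y ∧ (orderOf x = orderOf y ∨
      ∃ x' y' : G, orderOf x' = orderOf x ∧ orderOf y' = orderOf y ∧ A.Adj x' y') := by
  simp only [orderSuper, SimpleGraph.fromRel_adj]
  constructor
  · rintro ⟨hne, (h | ⟨x', y', hx, hy, hA⟩) | (h | ⟨x', y', hx, hy, hA⟩)⟩
    · exact ⟨hne, Or.inl h⟩
    · exact ⟨hne, Or.inr ⟨x', y', hx, hy, hA⟩⟩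
    · exact ⟨hne, Or.inl h.symm⟩
    · exact ⟨hne, Or.inr ⟨y', x', hy, hx, hA.symm⟩⟩
  · rintro ⟨hne, h⟩
    exact ⟨hne, Or.inl h⟩

lemma orderOf_pow_div {G : Type*} [Group G] (y : G) {d : ℕ} (hd : d ∣ orderOf y)
    (h0 : orderOf y ≠ 0) : orderOf (y ^ (orderOf y / d)) = d := by
  have hd0 : d ≠ 0 := fun h => h0 (Nat.eq_zero_of_zero_dvd (h ▸ hd))
  have hnd : orderOf y / d ≠ 0 :=
    Nat.div_ne_zero_iff.mpr ⟨hd0, Nat.le_of_dvd (Nat.pos_of_ne_zero h0) hd⟩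
  rw [orderOf_pow' y hnd, Nat.gcd_eq_right (Nat.div_dvd_of_dvd hd), Nat.div_div_self hd h0]

/-- For a finite group `G`, the order super power graph equals the order super commuting
graph iff every element of `G` has prime power order. -/
theorem orderSuper_powerGraph_eq_orderSuper_commutingGraph_iff
    (G : Type*) [Group G] [Fintype G] :
    orderSuper G (powerGraph G) = orderSuper G (commutingGraph G) ↔
      ∀ x : G, ∃ (p k : ℕ), p.Prime ∧ orderOf x = p ^ k := by
  constructor
  · intro heq x
    by_contra hx
    push_neg at hx
    have hn0 : orderOf x ≠ 0 := (orderOf_pos x).ne'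
    have hn1 : orderOf x ≠ 1 := fun h1 => hx 2 0 Nat.prime_two (by simpa using h1)
    have hpp : (orderOf x).minFac.Prime := Nat.minFac_prime hn1
    have hpd : (orderOf x).minFac ∣ orderOf x := Nat.minFac_dvd _
    have hm1 : (ordCompl[(orderOf x).minFac] (orderOf x)) ≠ 1 := by
      intro h1
      have h2 := Nat.ordProj_mul_ordCompl_eq_self (orderOf x) (orderOf x).minFac
      rw [h1, mul_one] at h2
      exact hx _ _ hpp h2.symm
    have hqq : (ordCompl[(orderOf x).minFac] (orderOf x)).minFac.Prime := Nat.minFac_prime hm1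
    have hqdm : (ordCompl[(orderOf x).minFac] (orderOf x)).minFac ∣
        ordCompl[(orderOf x).minFac] (orderOf x) := Nat.minFac_dvd _
    have hqd : (ordCompl[(orderOf x).minFac] (orderOf x)).minFac ∣ orderOf x :=
      hqdm.trans (Nat.ordCompl_dvd _ _)
    set p := (orderOf x).minFac with hp
    set q := (ordCompl[p] (orderOf x)).minFac with hq
    have hpq : p ≠ q := fun h => Nat.not_dvd_ordCompl hpp hn0 (h ▸ hqdm)
    have hou : orderOf (x ^ (orderOf x / p)) = p := orderOf_pow_div x hpd hn0
    have hov : orderOf (x ^ (orderOf x / q)) = q := orderOf_pow_div x hqd hn0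
    have huv : x ^ (orderOf x / p) ≠ x ^ (orderOf x / q) :=
      fun h => hpq (by rw [← hou, ← hov, h])
    have hcomm : Commute (x ^ (orderOf x / p)) (x ^ (orderOf x / q)) :=
      (Commute.refl x).pow_pow _ _
    have hadj : (orderSuper G (commutingGraph G)).Adj (x ^ (orderOf x / p))
        (x ^ (orderOf x / q)) := by
      rw [adj_orderSuper]
      refine ⟨huv, Or.inr ⟨_, _, rfl, rfl, ?_⟩⟩
      simp only [commutingGraph, SimpleGraph.fromRel_adj]
      exact ⟨huv, Or.inl hcomm⟩
    rw [← heq, adj_orderSuper] at hadj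
    rcases hadj.2 with h | ⟨u', v', hu', hv', hA⟩
    · exact hpq (by rw [← hou, ← hov, h])
    · simp only [powerGraph, SimpleGraph.fromRel_adj] at hA
      rcases hA.2 with h | h
      · have hd : orderOf u' ∣ orderOf v' := orderOf_dvd_of_mem_zpowers h
        rw [hu', hv', hou, hov] at hd
        exact hpq ((Nat.prime_dvd_prime_iff_eq hpp hqq).mp hd)
      · have hd : orderOf v' ∣ orderOf u' := orderOf_dvd_of_mem_zpowers h
        rw [hu', hv', hou, hov] at hd
        exact hpq ((Nat.prime_dvd_prime_iff_eq hqq hpp).mp hd).symm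
  · intro H
    ext x y
    rw [adj_orderSuper, adj_orderSuper]
    constructor
    · rintro ⟨hne, h | ⟨x', y', hx', hy', hA⟩⟩
      · exact ⟨hne, Or.inl h⟩
      · refine ⟨hne, Or.inr ⟨x', y', hx', hy', ?_⟩⟩
        simp only [powerGraph, SimpleGraph.fromRel_adj] at hA
        simp only [commutingGraph, SimpleGraph.fromRel_adj]
        rcases hA.2 with h | h
        · obtain ⟨k, hk⟩ := Subgroup.mem_zpowers_iff.mp h
          exact ⟨hA.1, Or.inr (hk ▸ ((Commute.refl y').zpow_right k).eq)⟩
        · obtain ⟨k, hk⟩ := Subgroup.mem_zpowers_iff.mp h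
          exact ⟨hA.1, Or.inl (hk ▸ ((Commute.refl x').zpow_right k).eq)⟩
    · rintro ⟨hne, h | ⟨x', y', hx', hy', hA⟩⟩
      · exact ⟨hne, Or.inl h⟩
      · by_cases hxy : orderOf x = orderOf y
        · exact ⟨hne, Or.inl hxy⟩
        refine ⟨hne, Or.inr ?_⟩
        have hy0 : orderOf y ≠ 0 := (orderOf_pos y).ne'
        have hx0 : orderOf x ≠ 0 := (orderOf_pos x).ne'
        by_cases hdvd : orderOf x ∣ orderOf y
        · refine ⟨y ^ (orderOf y / orderOf x), y, orderOf_pow_div y hdvd hy0, rfl, ?_⟩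
          simp only [powerGraph, SimpleGraph.fromRel_adj]
          refine ⟨?_, Or.inl (Subgroup.mem_zpowers_iff.mpr
            ⟨(orderOf y / orderOf x : ℕ), by rw [zpow_natCast]⟩)⟩
          intro h
          apply hxy
          rw [← orderOf_pow_div y hdvd hy0, h]
        by_cases hdvd2 : orderOf y ∣ orderOf x
        · refine ⟨x, x ^ (orderOf x / orderOf y), rfl, orderOf_pow_div x hdvd2 hx0, ?_⟩
          simp only [powerGraph, SimpleGraph.fromRel_adj]
          refine ⟨?_, Or.inr (Subgroup.mem_zpowers_iff.mpr
            ⟨(orderOf x / orderOf y : ℕ), by rw [zpow_natCast]⟩)⟩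
          intro h
          apply hxy
          rw [← orderOf_pow_div x hdvd2 hx0, ← h]
        -- contradiction: x', y' commute with coprime prime power orders
        exfalso
        simp only [commutingGraph, SimpleGraph.fromRel_adj] at hA
        obtain ⟨p, i, hpp, hpi⟩ := H x
        obtain ⟨q, j, hqq, hqj⟩ := H y
        have hpq : p ≠ q := by
          intro h
          subst h
          rcases le_total i j with hij | hij
          · exact hdvd (by rw [hpi, hqj]; exact pow_dvd_pow p hij)
          · exact hdvd2 (by rw [hpi, hqj]; exact pow_dvd_pow p hij)
        have hcop : Nat.Coprime (orderOf x') (orderOf y') := by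
          rw [hx', hy', hpi, hqj]
          exact Nat.Coprime.pow i j ((Nat.coprime_primes hpp hqq).mpr hpq)
        have hcomm : Commute x' y' := by
          rcases hA.2 with h | h
          · exact h
          · exact h.symm
        have horder : orderOf (x' * y') = orderOf x * orderOf y := by
          rw [Commute.orderOf_mul_eq_mul_orderOf_of_coprime hcomm hcop, hx', hy']
        obtain ⟨r, m, hrr, hrm⟩ := H (x' * y')
        rw [horder, hpi, hqj] at hrm
        have hi : i ≠ 0 := by
          rintro rfl
          exact hdvd (by rw [hpi]; simp)
        have hj : j ≠ 0 := by
          rintro rfl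
          exact hdvd2 (by rw [hqj]; simp)
        have hpr : p = r := by
          have hd : p ∣ r ^ m := hrm ▸ Dvd.dvd.mul_right (dvd_pow_self p hi) _
          exact (Nat.prime_dvd_prime_iff_eq hpp hrr).mp (hpp.dvd_of_dvd_pow hd)
        have hqr : q = r := by
          have hd : q ∣ r ^ m := hrm ▸ Dvd.dvd.mul_left (dvd_pow_self q hj) _
          exact (Nat.prime_dvd_prime_iff_eq hqq hrr).mp (hqq.dvd_of_dvd_pow hd)
        exact hpq (hpr.trans hqr.symm)
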